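/- Let G be a simple graph on a finite vertex set V with chromatic number χ, let c : V → Fin χ be a proper coloring of G, and let D ⊆ V be such that c is the unique proper coloring V → Fin χ of G agreeing with c at every vertex of D. If a vertex v ∈ V satisfies degree(v) + 2 ≤ χ, then v ∈ D. -/

import Mathlib

/-- A vertex of degree at most `χ(G) − 2` belongs to every defining set of a
`χ(G)`-coloring of `G` (used in the proofs of Theorems 3.2 and 3.3). -/
theorem stmt_8 {V : Type*} [Fintype V] (G : SimpleGraph V) [DecidableRel G.Adj]
    (χ : ℕ) (hχ : G.chromaticNumber = χ) (c : V → Fin χ)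
    (hc : ∀ u v : V, G.Adj u v → c u ≠ c v)
    (D : Set V)
    (hD : ∀ c' : V → Fin χ, (∀ u v : V, G.Adj u v → c' u ≠ c' v) →
      (∀ x ∈ D, c' x = c x) → c' = c)
    (v : V) (hv : G.degree v + 2 ≤ χ) : v ∈ D := by
  by_contra hvD
  classical
  set S : Finset (Fin χ) := insert (c v) ((G.neighborFinset v).image c) with hS
  have hcard : S.card < Fintype.card (Fin χ) := by
    have h1 : S.card ≤ ((G.neighborFinset v).image c).card + 1 :=
      Finset.card_insert_le _ _
    have h2 : ((G.neighborFinset v).image c).card ≤ G.degree v :=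
      (Finset.card_image_le).trans_eq (G.card_neighborFinset_eq_degree v)
    simp only [Fintype.card_fin]
    omega
  have hb : ∃ b : Fin χ, b ∉ S := by
    by_contra h
    push_neg at h
    have : Finset.univ ⊆ S := fun x _ => h x
    have := Finset.card_le_card this
    simp only [Finset.card_univ] at this
    omega
  obtain ⟨b, hb⟩ := hb
  have hbv : b ≠ c v := fun h => hb (h ▸ Finset.mem_insert_self _ _)
  have hbn : ∀ w, G.Adj v w → b ≠ c w := by
    intro w hw h
    exact hb (Finset.mem_insert_of_mem (Finset.mem_image.2
      ⟨w, (G.mem_neighborFinset v w).2 hw, h.symm⟩))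
  set c' : V → Fin χ := fun u => if u = v then b else c u with hc'
  have hprop : ∀ u w : V, G.Adj u w → c' u ≠ c' w := by
    intro u w huw
    simp only [hc']
    by_cases hu : u = v <;> by_cases hw : w = v
    · rw [hu, hw] at huw; exact absurd huw (G.loopless.irrefl _)
    · subst hu; simp only [if_pos rfl, if_neg hw]; exact hbn w huw
    · subst hw; simp only [if_pos rfl, if_neg hu]; exact fun h => hbn u huw.symm h.symm
    · simpa [hu, hw] using hc u w huw
  have heq := hD c' hprop (by
    intro x hx
    simp only [hc', if_neg (fun h : x = v => hvD (h ▸ hx))])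
  have : c' v = c v := by rw [heq]
  simp only [hc', if_pos rfl] at this
  exact hbv this
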